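/- Define q:ℤ≥0→ℤ≥0 by q(0)=0, q(j)=⌊φj⌋+1 if j∈A, and q(j)=⌊(φ−1)j⌋ if j∈B. Then q is a well-defined bijection of the set of non-negative integers onto itself, and the map j↦q(j)−j is a bijection from the set of non-negative integers onto the set ℤ of all integers (i.e., every integer appears exactly once in the sequence (q(j)−j), j=0,1,2,…). -/

import Mathlib

/-- The golden ratio φ = (1 + √5)/2. -/
noncomputable def phi : ℝ := (1 + Real.sqrt 5) / 2

/-- The lower Wythoff sequence a(n) = ⌊nφ⌋. -/
noncomputable def wa (n : ℕ) : ℕ := ⌊(n : ℝ) * phi⌋₊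

/-- The upper Wythoff sequence b(n) = ⌊nφ²⌋. -/
noncomputable def wb (n : ℕ) : ℕ := ⌊(n : ℝ) * phi ^ 2⌋₊

/-- A = range of the lower Wythoff sequence. -/
def WA : Set ℕ := {m | ∃ n : ℕ, 0 < n ∧ wa n = m}

/-- B = range of the upper Wythoff sequence. -/
def WB : Set ℕ := {m | ∃ n : ℕ, 0 < n ∧ wb n = m}

open scoped Classical in
/-- q(0) = 0, q(j) = ⌊φj⌋+1 if j ∈ A, q(j) = ⌊(φ−1)j⌋ if j ∈ B. -/
noncomputable def q (j : ℕ) : ℕ :=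
  if j = 0 then 0
  else if j ∈ WA then wa j + 1
  else ⌊(phi - 1) * (j : ℝ)⌋₊


lemma sqrt5_lt : 2 < Real.sqrt 5 ∧ Real.sqrt 5 < 3 := by
  have h := Real.sq_sqrt (show (0:ℝ) ≤ 5 by norm_num)
  have h0 := Real.sqrt_nonneg 5
  constructor <;> nlinarith

lemma one_lt_phi : 1 < phi := by unfold phi; nlinarith [sqrt5_lt.1]
lemma phi_lt_two : phi < 2 := by unfold phi; nlinarith [sqrt5_lt.2]
lemma phi_pos : 0 < phi := lt_trans one_pos one_lt_phi
lemma phi_sq : phi ^ 2 = phi + 1 := by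
  have h := Real.sq_sqrt (show (0:ℝ) ≤ 5 by norm_num)
  unfold phi; nlinarith

lemma phi_irr : Irrational phi := by
  have h5 : Irrational (Real.sqrt 5) := by
    simpa using (Nat.prime_five).irrational_sqrt
  have h2 : Irrational (Real.sqrt 5 / (2:ℕ)) :=
    (irrational_div_natCast_iff).mpr ⟨by norm_num, h5⟩
  have h3 : Irrational (((1/2:ℚ):ℝ) + Real.sqrt 5 / (2:ℕ)) :=
    irrational_ratCast_add_iff.mpr h2
  have he : phi = ((1/2:ℚ):ℝ) + Real.sqrt 5 / (2:ℕ) := by unfold phi; push_cast; ring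
  rwa [he]


lemma nphi_ne (n : ℕ) (hn : 0 < n) (m : ℕ) : (n:ℝ) * phi ≠ m := by
  have : Irrational ((n:ℝ) * phi) := by
    rw [show (n:ℝ) * phi = (n:ℕ) * phi by norm_num]
    exact (irrational_natCast_mul_iff).mpr ⟨hn.ne', phi_irr⟩
  exact this.ne_nat m

lemma wa_le (n : ℕ) : (wa n : ℝ) ≤ n * phi := Nat.floor_le (mul_nonneg (Nat.cast_nonneg n) phi_pos.le)
lemma lt_wa (n : ℕ) : (n:ℝ) * phi < wa n + 1 := Nat.lt_floor_add_one _
lemma wa_lt_strict (n : ℕ) (hn : 0 < n) : (wa n : ℝ) < n * phi :=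
  (wa_le n).lt_of_ne fun h => nphi_ne n hn (wa n) h.symm

lemma wb_eq (n : ℕ) : wb n = wa n + n := by
  unfold wa wb
  rw [phi_sq, mul_add, mul_one, Nat.floor_add_natCast (mul_nonneg (Nat.cast_nonneg n) phi_pos.le)]

lemma wa_pos (n : ℕ) (hn : 0 < n) : 0 < wa n := by
  unfold wa
  rw [Nat.floor_pos]
  have : (1:ℝ) ≤ n := by exact_mod_cast hn
  nlinarith [one_lt_phi]

lemma wa_strictMono : StrictMono wa := by
  intro m n h
  have h1 : (m:ℝ) + 1 ≤ n := by exact_mod_cast h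
  have : wa m + 1 ≤ wa n := Nat.le_floor (by
    push_cast
    nlinarith [wa_le m, one_lt_phi, phi_pos])
  omega

lemma waa (n : ℕ) (hn : 0 < n) : wa (wa n) + 1 = wa n + n := by
  obtain ⟨m, rfl⟩ : ∃ m, n = m + 1 := ⟨n - 1, by omega⟩
  have h1 := wa_le (m+1)
  have h2 := lt_wa (m+1)
  have h3 := wa_lt_strict (m+1) hn
  have : wa (wa (m+1)) = wa (m+1) + m := by
    rw [wa, Nat.floor_eq_iff (mul_nonneg (Nat.cast_nonneg _) phi_pos.le)]
    push_cast at h1 h2 h3 ⊢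
    constructor
    · nlinarith [phi_sq, phi_lt_two, mul_pos (show (0:ℝ) < (wa (m+1):ℝ) + 1 - ((m:ℝ)+1)*phi by linarith) (show (0:ℝ) < 2 - phi by linarith [phi_lt_two])]
    · nlinarith [phi_sq, mul_pos (show (0:ℝ) < ((m:ℝ)+1)*phi - wa (m+1) by linarith) (show (0:ℝ) < phi - 1 by linarith [one_lt_phi])]
  omega

lemma floor_b (n : ℕ) (hn : 0 < n) : ⌊(phi - 1) * (wb n : ℝ)⌋₊ = wa n := by
  have h1 := wa_le n
  have h2 := lt_wa n
  have h3 := wa_lt_strict n hn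
  have hb := wb_eq n
  have hbr : (wb n : ℝ) = (wa n : ℝ) + n := by rw [hb]; push_cast; ring
  rw [Nat.floor_eq_iff (by nlinarith [one_lt_phi, (Nat.cast_nonneg (wb n) : (0:ℝ) ≤ wb n)] : (0:ℝ) ≤ (phi-1) * (wb n:ℝ))]
  rw [hbr]
  constructor
  · nlinarith [phi_sq, mul_pos (show (0:ℝ) < (n:ℝ)*phi - wa n by linarith) (show (0:ℝ) < 2 - phi by linarith [phi_lt_two])]
  · nlinarith [phi_sq, one_lt_phi, mul_pos (show (0:ℝ) < (wa n:ℝ) + 1 - (n:ℝ)*phi by linarith) (show (0:ℝ) < 2 - phi by linarith [phi_lt_two])]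

lemma conj : Real.HolderConjugate phi (phi ^ 2) := by
  rw [Real.holderConjugate_iff]
  constructor
  · exact one_lt_phi
  · have h0 : phi ≠ 0 := ne_of_gt phi_pos
    field_simp
    nlinarith [phi_sq]

lemma mem_A_bridge (j : ℕ) : j ∈ WA ↔ (j:ℤ) ∈ {x : ℤ | ∃ k > 0, beattySeq phi k = x} := by
  constructor
  · rintro ⟨n, hn, rfl⟩
    refine ⟨(n:ℤ), by exact_mod_cast hn, ?_⟩
    rw [beattySeq]
    rw [show (((n:ℤ)):ℝ) = (n:ℝ) by push_cast; ring]
    exact (Int.natCast_floor_eq_floor (mul_nonneg (Nat.cast_nonneg n) phi_pos.le)).symm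
  · rintro ⟨k, hk, hbk⟩
    lift k to ℕ using hk.le with n
    have hn : 0 < n := by exact_mod_cast hk
    refine ⟨n, hn, ?_⟩
    have : ((wa n : ℤ)) = (j:ℤ) := by
      rw [← hbk, beattySeq, wa]
      rw [show (((n:ℤ)):ℝ) = (n:ℝ) by push_cast; ring]
      exact Int.natCast_floor_eq_floor (mul_nonneg (Nat.cast_nonneg n) phi_pos.le)
    exact_mod_cast this

lemma mem_B_bridge (j : ℕ) : j ∈ WB ↔ (j:ℤ) ∈ {x : ℤ | ∃ k > 0, beattySeq (phi^2) k = x} := by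
  have hsq : (0:ℝ) ≤ phi ^ 2 := by positivity
  constructor
  · rintro ⟨n, hn, rfl⟩
    refine ⟨(n:ℤ), by exact_mod_cast hn, ?_⟩
    rw [beattySeq]
    rw [show (((n:ℤ)):ℝ) = (n:ℝ) by push_cast; ring]
    exact (Int.natCast_floor_eq_floor (mul_nonneg (Nat.cast_nonneg n) hsq)).symm
  · rintro ⟨k, hk, hbk⟩
    lift k to ℕ using hk.le with n
    have hn : 0 < n := by exact_mod_cast hk
    refine ⟨n, hn, ?_⟩
    have : ((wb n : ℤ)) = (j:ℤ) := by
      rw [← hbk, beattySeq, wb]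
      rw [show (((n:ℤ)):ℝ) = (n:ℝ) by push_cast; ring]
      exact Int.natCast_floor_eq_floor (mul_nonneg (Nat.cast_nonneg n) hsq)
    exact_mod_cast this

lemma partitionAB (j : ℕ) (hj : 0 < j) :
    (j ∈ WA ∧ j ∉ WB) ∨ (j ∈ WB ∧ j ∉ WA) := by
  have hsd := phi_irr.beattySeq_symmDiff_beattySeq_pos conj
  have hmem : (j:ℤ) ∈ {n : ℤ | 0 < n} := by
    simp only [Set.mem_setOf_eq]; exact_mod_cast hj
  rw [← hsd, Set.mem_symmDiff] at hmem
  rw [mem_A_bridge j, mem_B_bridge j]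
  tauto

lemma wb_pos (n : ℕ) (hn : 0 < n) : 0 < wb n := by
  rw [wb_eq]; omega

lemma q_zero : q 0 = 0 := by simp [q]

lemma q_wa (n : ℕ) (hn : 0 < n) : q (wa n) = wb n := by
  have h1 : 0 < wa n := wa_pos n hn
  have h2 : wa n ∈ WA := ⟨n, hn, rfl⟩
  rw [q, if_neg h1.ne', if_pos h2, wb_eq]
  exact waa n hn

lemma q_wb (n : ℕ) (hn : 0 < n) : q (wb n) = wa n := by
  have h1 : 0 < wb n := wb_pos n hn
  have hB : wb n ∈ WB := ⟨n, hn, rfl⟩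
  have hA : wb n ∉ WA := by
    rcases partitionAB _ h1 with ⟨_, h⟩ | ⟨_, h⟩
    · exact absurd hB h
    · exact h
  rw [q, if_neg h1.ne', if_neg hA]
  exact floor_b n hn

lemma q_invol : Function.Involutive q := by
  intro j
  rcases Nat.eq_zero_or_pos j with rfl | hj
  · rw [q_zero, q_zero]
  rcases partitionAB j hj with ⟨⟨n, hn, rfl⟩, _⟩ | ⟨⟨n, hn, rfl⟩, _⟩
  · rw [q_wa n hn, q_wb n hn]
  · rw [q_wb n hn, q_wa n hn]

lemma f_cases (j : ℕ) :
    ((q j : ℤ) - j = 0 ∧ j = 0) ∨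
    (∃ n : ℕ, 0 < n ∧ j = wa n ∧ (q j : ℤ) - j = n) ∨
    (∃ n : ℕ, 0 < n ∧ j = wb n ∧ (q j : ℤ) - j = -n) := by
  rcases Nat.eq_zero_or_pos j with rfl | hj
  · left; simp [q_zero]
  rcases partitionAB j hj with ⟨⟨n, hn, rfl⟩, _⟩ | ⟨⟨n, hn, rfl⟩, _⟩
  · right; left
    refine ⟨n, hn, rfl, ?_⟩
    rw [q_wa n hn, wb_eq]; push_cast; ring
  · right; right
    refine ⟨n, hn, rfl, ?_⟩
    rw [q_wb n hn, wb_eq n]; push_cast; ring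

theorem stmt_15 :
    Function.Bijective q ∧
    Function.Bijective (fun j : ℕ => (q j : ℤ) - (j : ℤ)) := by
  refine ⟨q_invol.bijective, ?_, ?_⟩
  · intro j j' h
    simp only [] at h
    rcases f_cases j with ⟨h1, rfl⟩ | ⟨n, hn, rfl, h1⟩ | ⟨n, hn, rfl, h1⟩ <;>
      rcases f_cases j' with ⟨h2, rfl⟩ | ⟨m, hm, rfl, h2⟩ | ⟨m, hm, rfl, h2⟩ <;>
      first
        | rfl
        | omega
        | (have hnm : n = m := by omega
           rw [hnm])
  · intro k
    rcases lt_trichotomy k 0 with hk | rfl | hk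
    · refine ⟨wb (-k).toNat, ?_⟩
      have hn : 0 < (-k).toNat := by omega
      have := q_wb (-k).toNat hn
      simp only []
      rw [this, wb_eq]
      push_cast [Int.toNat_of_nonneg (by omega : 0 ≤ -k)]
      ring
    · exact ⟨0, by simp [q_zero]⟩
    · refine ⟨wa k.toNat, ?_⟩
      have hn : 0 < k.toNat := by omega
      simp only []
      rw [q_wa k.toNat hn, wb_eq]
      push_cast [Int.toNat_of_nonneg hk.le]
      ring
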